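/- Let P(z) = z + z² ∈ ℂ_p[z], let B = {z ∈ ℂ_p : |z| < 1}, and let g : B → B be the inverse of the bijection P|_B : B → B. Then g is not an analytic element on B: there is no rational function R ∈ ℂ_p(z) without poles in B with sup{ |R(z) − g(z)| : z ∈ B } < 1, and hence no sequence of rational functions without poles in B converges to g uniformly on B. In particular the analytic element P|_B is not bi-analytic. -/

import Mathlib

/-- `K` is (a field isometrically isomorphic to) the field `ℂ_p` of `p`-adic complex
numbers: a complete algebraically closed ultrametric normed field, extending `ℚ_p`
isometrically, in which the elements algebraic over `ℚ_p` are dense. -/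
structure IsPadicComplexField (p : ℕ) [Fact p.Prime] (K : Type*)
    [NontriviallyNormedField K] [Algebra ℚ_[p] K] : Prop where
  isAlgClosed : IsAlgClosed K
  completeSpace : CompleteSpace K
  isUltrametricDist : IsUltrametricDist K
  norm_algebraMap : ∀ q : ℚ_[p], ‖algebraMap ℚ_[p] K q‖ = ‖q‖
  dense_algebraic : Dense {x : K | IsAlgebraic ℚ_[p] x}

/-- `R` coincides on `D` with a rational function without poles in `D`. -/
def IsRationalNoPoles {K : Type*} [NormedField K] (D : Set K) (R : K → K) : Prop :=
  ∃ q₁ q₂ : Polynomial K, (∀ z ∈ D, q₂.eval z ≠ 0) ∧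
    ∀ z ∈ D, R z = q₁.eval z / q₂.eval z

/-- An analytic element on `D`: a uniform limit on `D` of rational functions
without poles in `D`. -/
def IsAnalyticElement {K : Type*} [NormedField K] (D : Set K) (f : K → K) : Prop :=
  ∀ ε : ℝ, 0 < ε → ∃ R : K → K, IsRationalNoPoles D R ∧ ∀ z ∈ D, ‖R z - f z‖ ≤ ε

section Aux

variable {K : Type*} [NontriviallyNormedField K]

lemma aux_norm_multiset_prod (s : Multiset K) : ‖s.prod‖ = (s.map fun x => ‖x‖).prod := by
  induction s using Multiset.induction with
  | empty => simp
  | cons a s ih => simp [norm_mul, ih]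

lemma aux_norm_sub_eq_right [IsUltrametricDist K] {u β : K} (h : ‖u‖ < ‖β‖) :
    ‖u - β‖ = ‖β‖ := by
  rw [sub_eq_add_neg,
    IsUltrametricDist.norm_add_eq_max_of_norm_ne_norm (by rw [norm_neg]; exact h.ne),
    norm_neg]
  exact max_eq_right h.le

lemma aux_exists_norm_pow_gt
    (hr : ∀ t : ℝ, 0 ≤ t → t < 1 → ∃ z : K, t < ‖z‖ ∧ ‖z‖ < 1)
    (t : ℝ) (ht : t < 1) (m : ℕ) :
    ∃ z : K, 0 < ‖z‖ ∧ ‖z‖ < 1 ∧ t < ‖z‖ ^ m := by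
  rcases le_or_gt t 0 with h0 | h0
  · obtain ⟨z, hz1, hz2⟩ := hr 0 le_rfl one_pos
    exact ⟨z, hz1, hz2, lt_of_le_of_lt h0 (pow_pos hz1 m)⟩
  rcases Nat.eq_zero_or_pos m with rfl | hm
  · obtain ⟨z, hz1, hz2⟩ := hr 0 le_rfl one_pos
    exact ⟨z, hz1, hz2, by simpa using ht⟩
  set t₁ : ℝ := t ^ ((m : ℝ)⁻¹) with ht₁
  have h₁pos : 0 < t₁ := Real.rpow_pos_of_pos h0 _
  have h₁lt : t₁ < 1 := Real.rpow_lt_one h0.le ht (by positivity)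
  obtain ⟨z, hz1, hz2⟩ := hr t₁ h₁pos.le h₁lt
  refine ⟨z, h₁pos.trans hz1, hz2, ?_⟩
  have key : t₁ ^ m = t := by
    rw [ht₁, ← Real.rpow_natCast (t ^ ((m : ℝ)⁻¹)) m, ← Real.rpow_mul h0.le,
      inv_mul_cancel₀ (by exact_mod_cast hm.ne'), Real.rpow_one]
  calc t = t₁ ^ m := key.symm
    _ < ‖z‖ ^ m := pow_lt_pow_left₀ hz1 h₁pos.le hm.ne'

/-- Gauss-norm bound: if a polynomial is bounded by `C` on the open unit ball and the
norms of elements of the open unit ball get arbitrarily close to `1`, then every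
coefficient has norm at most `C`. -/
lemma aux_coeff_le [IsUltrametricDist K]
    (hr : ∀ t : ℝ, 0 ≤ t → t < 1 → ∃ z : K, t < ‖z‖ ∧ ‖z‖ < 1)
    (N : Polynomial K) (C : ℝ)
    (hb : ∀ z : K, ‖z‖ < 1 → ‖N.eval z‖ ≤ C) (n : ℕ) : ‖N.coeff n‖ ≤ C := by
  classical
  have hC : 0 ≤ C := le_trans (norm_nonneg _) (hb 0 (by simp))
  by_contra hcon
  push_neg at hcon
  have hex : ∃ m : ℕ, ∀ j, ‖N.coeff j‖ ≤ ‖N.coeff m‖ := by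
    have hnmem : n ∈ N.support := by
      rw [Polynomial.mem_support_iff]
      intro h
      rw [h] at hcon
      simp only [norm_zero] at hcon
      exact absurd hC hcon.not_ge
    obtain ⟨m, hm, hmax⟩ := N.support.exists_max_image (fun j => ‖N.coeff j‖) ⟨n, hnmem⟩
    refine ⟨m, fun j => ?_⟩
    by_cases hj : j ∈ N.support
    · exact hmax j hj
    · rw [Polynomial.notMem_support_iff.mp hj]
      simp
  set m₀ : ℕ := Nat.find hex with hm₀def
  set G : ℝ := ‖N.coeff m₀‖ with hGdef
  have hG : ∀ j, ‖N.coeff j‖ ≤ G := Nat.find_spec hex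
  have hGC : C < G := lt_of_lt_of_le hcon (hG n)
  have hGpos : 0 < G := lt_of_le_of_lt hC hGC
  have hsmall : ∀ j, j < m₀ → ‖N.coeff j‖ < G := by
    intro j hj
    have hmin := Nat.find_min hex hj
    push_neg at hmin
    obtain ⟨i, hi⟩ := hmin
    exact lt_of_lt_of_le hi (hG i)
  -- the threshold
  set T : Finset ℝ :=
    insert (C / G) ((Finset.range m₀).image fun j => ‖N.coeff j‖ / G) with hT
  have hTne : T.Nonempty := ⟨C / G, Finset.mem_insert_self _ _⟩
  set t : ℝ := T.max' hTne with htdef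
  have ht1 : t < 1 := by
    rw [htdef, Finset.max'_lt_iff]
    intro y hy
    rw [hT, Finset.mem_insert] at hy
    rcases hy with rfl | hy
    · exact (div_lt_one hGpos).mpr hGC
    · obtain ⟨j, hj, rfl⟩ := Finset.mem_image.mp hy
      exact (div_lt_one hGpos).mpr (hsmall j (Finset.mem_range.mp hj))
  obtain ⟨z, hz0, hz1, hzpow⟩ := aux_exists_norm_pow_gt hr t ht1 m₀
  set r : ℝ := ‖z‖ with hrdef
  have hCr : C < G * r ^ m₀ := by
    have h1 : C / G ≤ t := Finset.le_max' _ _ (Finset.mem_insert_self _ _)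
    have : C / G < r ^ m₀ := lt_of_le_of_lt h1 hzpow
    calc C = (C / G) * G := by field_simp
      _ < r ^ m₀ * G := by
        exact mul_lt_mul_of_pos_right this hGpos
      _ = G * r ^ m₀ := mul_comm _ _
  have hjsmall : ∀ j, j < m₀ → ‖N.coeff j‖ < G * r ^ m₀ := by
    intro j hj
    have hmemT : ‖N.coeff j‖ / G ∈ T := by
      rw [hT]
      exact Finset.mem_insert_of_mem (Finset.mem_image.mpr ⟨j, Finset.mem_range.mpr hj, rfl⟩)
    have h1 : ‖N.coeff j‖ / G ≤ t := Finset.le_max' T _ hmemT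
    have h2 : ‖N.coeff j‖ / G < r ^ m₀ := lt_of_le_of_lt h1 hzpow
    calc ‖N.coeff j‖ = (‖N.coeff j‖ / G) * G := by field_simp
      _ < r ^ m₀ * G := mul_lt_mul_of_pos_right h2 hGpos
      _ = G * r ^ m₀ := mul_comm _ _
  -- N.eval z has norm G * r ^ m₀
  have hm₀le : m₀ ≤ N.natDegree := by
    apply Polynomial.le_natDegree_of_ne_zero
    intro h
    rw [hGdef, h, norm_zero] at hGpos
    exact lt_irrefl _ hGpos
  have hmem : m₀ ∈ Finset.range (N.natDegree + 1) :=
    Finset.mem_range.mpr (Nat.lt_succ_of_le hm₀le)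
  have heval : N.eval z = N.coeff m₀ * z ^ m₀ +
      ∑ j ∈ (Finset.range (N.natDegree + 1)).erase m₀, N.coeff j * z ^ j := by
    rw [Polynomial.eval_eq_sum_range]
    exact (Finset.add_sum_erase _ (fun i => N.coeff i * z ^ i) hmem).symm
  -- bound on tail
  set Ctail : ℝ := max (t * G) (G * (r ^ m₀ * r)) with hCtail
  have hCtail_lt : Ctail < G * r ^ m₀ := by
    rw [hCtail, max_lt_iff]
    constructor
    · calc t * G < r ^ m₀ * G := mul_lt_mul_of_pos_right hzpow hGpos
        _ = G * r ^ m₀ := mul_comm _ _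
    · have : r ^ m₀ * r < r ^ m₀ * 1 :=
        mul_lt_mul_of_pos_left hz1 (pow_pos hz0 m₀)
      rw [mul_one] at this
      exact mul_lt_mul_of_pos_left this hGpos
  have hCtail_nonneg : 0 ≤ Ctail := by
    rw [hCtail, le_max_iff]
    right; positivity
  have htail : ‖∑ j ∈ (Finset.range (N.natDegree + 1)).erase m₀, N.coeff j * z ^ j‖
      ≤ Ctail := by
    apply IsUltrametricDist.norm_sum_le_of_forall_le_of_nonneg hCtail_nonneg
    intro j hj
    have hjne : j ≠ m₀ := (Finset.mem_erase.mp hj).1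
    rw [norm_mul, norm_pow]
    rcases lt_or_gt_of_ne hjne with hlt | hgt
    · -- j < m₀
      have h1 : ‖N.coeff j‖ ≤ t * G := by
        have hmemT : ‖N.coeff j‖ / G ∈ T := by
          rw [hT]
          exact Finset.mem_insert_of_mem
            (Finset.mem_image.mpr ⟨j, Finset.mem_range.mpr hlt, rfl⟩)
        have := Finset.le_max' T (‖N.coeff j‖ / G) hmemT
        calc ‖N.coeff j‖ = (‖N.coeff j‖ / G) * G := by field_simp
          _ ≤ t * G := mul_le_mul_of_nonneg_right this hGpos.le
      have h2 : r ^ j ≤ 1 := pow_le_one₀ hz0.le hz1.le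
      calc ‖N.coeff j‖ * r ^ j ≤ ‖N.coeff j‖ * 1 :=
            mul_le_mul_of_nonneg_left h2 (norm_nonneg _)
        _ = ‖N.coeff j‖ := mul_one _
        _ ≤ t * G := h1
        _ ≤ Ctail := le_max_left _ _
    · -- j > m₀, so j ≥ m₀ + 1
      have h1 : r ^ j ≤ r ^ (m₀ + 1) :=
        pow_le_pow_of_le_one hz0.le hz1.le hgt
      calc ‖N.coeff j‖ * r ^ j ≤ G * r ^ j :=
            mul_le_mul_of_nonneg_right (hG j) (pow_nonneg hz0.le _)
        _ ≤ G * r ^ (m₀ + 1) := mul_le_mul_of_nonneg_left h1 hGpos.le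
        _ = G * (r ^ m₀ * r) := by rw [pow_succ]
        _ ≤ Ctail := le_max_right _ _
  have hlead : ‖N.coeff m₀ * z ^ m₀‖ = G * r ^ m₀ := by
    rw [norm_mul, norm_pow]
  have hevalnorm : ‖N.eval z‖ = G * r ^ m₀ := by
    rw [heval, IsUltrametricDist.norm_add_eq_max_of_norm_ne_norm
      (by rw [hlead]; exact (lt_of_le_of_lt htail hCtail_lt).ne'), hlead]
    exact max_eq_left (le_trans htail hCtail_lt.le)
  have := hb z hz1
  rw [hevalnorm] at this
  exact absurd (lt_of_lt_of_le hCr this) (lt_irrefl C)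

end Aux

theorem inverse_of_square_plus_id_not_analytic_element
    {p : ℕ} [Fact p.Prime] {K : Type*} [NontriviallyNormedField K] [Algebra ℚ_[p] K]
    (hK : IsPadicComplexField p K)
    (g : K → K)
    (hg_mem : ∀ w : K, ‖w‖ < 1 → ‖g w‖ < 1)
    (hg_left : ∀ z : K, ‖z‖ < 1 → g (z + z ^ 2) = z)
    (hg_right : ∀ w : K, ‖w‖ < 1 → g w + (g w) ^ 2 = w) :
    (¬ ∃ R : K → K, IsRationalNoPoles {z : K | ‖z‖ < 1} R ∧
        ∃ c : ℝ, c < 1 ∧ ∀ z : K, ‖z‖ < 1 → ‖R z - g z‖ ≤ c) ∧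
      ¬ IsAnalyticElement {z : K | ‖z‖ < 1} g := by
  haveI := hK.isAlgClosed
  haveI := hK.isUltrametricDist
  have hr : ∀ t : ℝ, 0 ≤ t → t < 1 → ∃ z : K, t < ‖z‖ ∧ ‖z‖ < 1 := by
    intro t ht0 ht1
    have hp1 : (1 : ℝ) < p := by exact_mod_cast (Fact.out : p.Prime).one_lt
    have hpinv : (p : ℝ)⁻¹ < 1 := inv_lt_one_of_one_lt₀ hp1
    obtain ⟨k, hk⟩ := exists_pow_lt_of_lt_one (by positivity : (0:ℝ) < (p : ℝ)⁻¹) ht1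
    have hk0 : k ≠ 0 := by
      rintro rfl
      rw [pow_zero] at hk
      exact absurd (hk.trans hpinv) (lt_irrefl 1)
    obtain ⟨z, hz⟩ := IsAlgClosed.exists_pow_nat_eq (algebraMap ℚ_[p] K (p : ℚ_[p]))
      (Nat.pos_of_ne_zero hk0)
    have hnz : ‖z‖ ^ k = (p : ℝ)⁻¹ := by
      rw [← norm_pow, hz, hK.norm_algebraMap, Padic.norm_p]
    refine ⟨z, ?_, ?_⟩
    · exact lt_of_pow_lt_pow_left₀ k (norm_nonneg z) (by rw [hnz]; exact hk)
    · by_contra h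
      push_neg at h
      have : (1 : ℝ) ≤ ‖z‖ ^ k := one_le_pow₀ h
      rw [hnz] at this
      exact absurd (lt_of_le_of_lt this hpinv) (lt_irrefl 1)
  have main : ¬ ∃ R : K → K, IsRationalNoPoles {z : K | ‖z‖ < 1} R ∧
      ∃ c : ℝ, c < 1 ∧ ∀ z : K, ‖z‖ < 1 → ‖R z - g z‖ ≤ c := by
    rintro ⟨R, ⟨q₁, q₂, hq₂, hRe⟩, c, hc1, hRg⟩
    have h0B : (0 : K) ∈ {z : K | ‖z‖ < 1} := by simp
    have hc0 : 0 ≤ c := le_trans (norm_nonneg _) (hRg 0 (by simp))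
    set M : ℝ := ‖q₂.eval 0‖ with hM
    have hM0 : 0 < M := norm_pos_iff.mpr (hq₂ 0 h0B)
    have hq₂ne : q₂ ≠ 0 := fun h => hq₂ 0 h0B (by simp [h])
    have hroots : ∀ β ∈ q₂.roots, (1 : ℝ) ≤ ‖β‖ := by
      intro β hβ
      by_contra h
      push_neg at h
      exact hq₂ β h ((Polynomial.mem_roots hq₂ne).mp hβ)
    have hfac : q₂ = Polynomial.C q₂.leadingCoeff *
        (q₂.roots.map fun a => Polynomial.X - Polynomial.C a).prod :=
      (IsAlgClosed.splits q₂).eq_prod_roots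
    have hkey : ∀ u : K, ‖u‖ < 1 →
        ‖q₂.eval u‖ = ‖q₂.leadingCoeff‖ * ((q₂.roots.map fun β => ‖β‖).prod) := by
      intro u hu
      conv_lhs => rw [hfac]
      rw [Polynomial.eval_mul, Polynomial.eval_C, norm_mul,
        Polynomial.eval_multiset_prod, Multiset.map_map, aux_norm_multiset_prod,
        Multiset.map_map]
      congr 1
      refine congrArg Multiset.prod (Multiset.map_congr rfl ?_)
      intro β hβ
      simp only [Function.comp_apply, Polynomial.eval_sub, Polynomial.eval_X,
        Polynomial.eval_C]
      exact aux_norm_sub_eq_right (lt_of_lt_of_le hu (hroots β hβ))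
    have hQconst : ∀ w : K, ‖w‖ < 1 → ‖q₂.eval w‖ = M := by
      intro w hw
      rw [hkey w hw, hM, ← hkey 0 (by simp)]
    set P : Polynomial K := Polynomial.X + Polynomial.X ^ 2 with hP
    set N : Polynomial K := q₁.comp P - Polynomial.X * q₂.comp P with hN
    have hPmem : ∀ z : K, ‖z‖ < 1 → ‖z + z ^ 2‖ < 1 := by
      intro z hz
      refine lt_of_le_of_lt (IsUltrametricDist.norm_add_le_max _ _) ?_
      rw [max_lt_iff]
      refine ⟨hz, ?_⟩
      rw [norm_pow]
      exact pow_lt_one₀ (norm_nonneg z) hz two_ne_zero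
    have hNeval : ∀ z : K, N.eval z = q₁.eval (z + z ^ 2) - z * q₂.eval (z + z ^ 2) := by
      intro z
      simp [hN, hP, Polynomial.eval_comp]
    have hNbound : ∀ z : K, ‖z‖ < 1 → ‖N.eval z‖ ≤ c * M := by
      intro z hz
      have hw := hPmem z hz
      have hgz := hg_left z hz
      have hRz := hRg (z + z ^ 2) hw
      rw [hRe (z + z ^ 2) hw, hgz] at hRz
      have hq2 : q₂.eval (z + z ^ 2) ≠ 0 := hq₂ _ hw
      have hsplit : q₁.eval (z + z ^ 2) - z * q₂.eval (z + z ^ 2) =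
          (q₁.eval (z + z ^ 2) / q₂.eval (z + z ^ 2) - z) * q₂.eval (z + z ^ 2) := by
        rw [sub_mul, div_mul_cancel₀ _ hq2]
      rw [hNeval z, hsplit, norm_mul, hQconst _ hw]
      exact mul_le_mul_of_nonneg_right hRz hM0.le
    have hcoeff : ∀ n, ‖N.coeff n‖ ≤ c * M := aux_coeff_le hr N (c * M) hNbound
    have hNm1 : ‖N.eval (-1 : K)‖ ≤ c * M := by
      rw [Polynomial.eval_eq_sum_range]
      apply IsUltrametricDist.norm_sum_le_of_forall_le_of_nonneg (by positivity)
      intro i _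
      rw [norm_mul, norm_pow, norm_neg, norm_one, one_pow, mul_one]
      exact hcoeff i
    have hNval : N.eval (-1 : K) = q₁.eval 0 + q₂.eval 0 := by
      rw [hNeval (-1 : K)]
      norm_num
    have hN0 : N.eval (0 : K) = q₁.eval 0 := by
      rw [hNeval 0]
      norm_num
    have hN0le : ‖N.eval (0 : K)‖ ≤ c * M := hNbound 0 (by simp)
    have hfin : M ≤ c * M := by
      have hsub : q₂.eval 0 = N.eval (-1 : K) - N.eval (0 : K) := by
        rw [hNval, hN0]; ring
      calc M = ‖q₂.eval 0‖ := hM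
        _ = ‖N.eval (-1 : K) - N.eval (0 : K)‖ := by rw [hsub]
        _ ≤ max ‖N.eval (-1 : K)‖ ‖N.eval (0 : K)‖ := by
            rw [sub_eq_add_neg]
            simpa [norm_neg] using
              IsUltrametricDist.norm_add_le_max (N.eval (-1 : K)) (-(N.eval (0 : K)))
        _ ≤ c * M := max_le hNm1 hN0le
    have : (1 : ℝ) ≤ c := by
      have := hfin
      nlinarith
    exact absurd (lt_of_le_of_lt this hc1) (lt_irrefl 1)
  refine ⟨main, fun hA => main ?_⟩
  obtain ⟨R, hR, hb⟩ := hA (1 / 2) (by norm_num)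
  exact ⟨R, hR, 1 / 2, by norm_num, fun z hz => hb z hz⟩
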